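/- Let A be a subspace of M_n(ℂ) with an orthogonal basis I = P_0, P_1, ..., P_d (with respect to the trace inner product), and let M, N be positive semidefinite n×n matrices such that ⟨M, P_i⟩·⟨P_i, N⟩ ≤ 0 for all i ≠ 0. Then ⟨M', N'⟩ ≤ (tr M)(tr N)/n, where M', N' are the orthogonal projections of M, N onto A. Moreover, equality holds if and only if ⟨M, P_i⟩·⟨P_i, N⟩ = 0 for all i ≠ 0. -/

import Mathlib

open Matrix
open scoped ComplexOrder

-- trace of sum expansion
lemma expand_trace {n d : ℕ} (P : Fin (d + 1) → Matrix (Fin n) (Fin n) ℂ)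
    (c : Fin (d + 1) → ℂ) (B : Matrix (Fin n) (Fin n) ℂ) :
    Matrix.trace ((∑ i, c i • P i) * B) = ∑ i, c i * Matrix.trace (P i * B) := by
  rw [Matrix.sum_mul, Matrix.trace_sum]
  simp [Matrix.smul_mul, Matrix.trace_smul, smul_eq_mul]

lemma trace_self_real {n : ℕ} (A : Matrix (Fin n) (Fin n) ℂ) :
    Matrix.trace (A * Aᴴ) = ((∑ i, ∑ k, Complex.normSq (A i k) : ℝ) : ℂ) := by
  simp only [Matrix.trace, Matrix.diag, Matrix.mul_apply, Matrix.conjTranspose_apply]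
  push_cast
  simp [Complex.mul_conj]

theorem proj_inner_le {n d : ℕ} (hn : 0 < n)
    (P : Fin (d + 1) → Matrix (Fin n) (Fin n) ℂ)
    (hP0 : P 0 = 1)
    (hPnz : ∀ i, P i ≠ 0)
    (horth : ∀ i j, i ≠ j → Matrix.trace (P i * (P j)ᴴ) = 0)
    (M N M' N' : Matrix (Fin n) (Fin n) ℂ)
    (hM : M.PosSemidef) (hN : N.PosSemidef)
    (hM' : M' ∈ Submodule.span ℂ (Set.range P))
    (hN' : N' ∈ Submodule.span ℂ (Set.range P))
    (hMproj : ∀ i, Matrix.trace ((M - M') * (P i)ᴴ) = 0)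
    (hNproj : ∀ i, Matrix.trace ((N - N') * (P i)ᴴ) = 0)
    (hneg : ∀ i, i ≠ 0 → Matrix.trace (M * (P i)ᴴ) * Matrix.trace (P i * Nᴴ) ≤ 0) :
    Matrix.trace (M' * N'ᴴ) ≤ Matrix.trace M * Matrix.trace N / n ∧
    (Matrix.trace (M' * N'ᴴ) = Matrix.trace M * Matrix.trace N / n ↔
      ∀ i, i ≠ 0 → Matrix.trace (M * (P i)ᴴ) * Matrix.trace (P i * Nᴴ) = 0) := by
  classical
  obtain ⟨b, hb⟩ := (Submodule.mem_span_range_iff_exists_fun ℂ).mp hN'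
  set α : Fin (d+1) → ℂ := fun j => Matrix.trace (M * (P j)ᴴ) with hα
  set β : Fin (d+1) → ℂ := fun j => Matrix.trace (P j * Nᴴ) with hβ
  set t : Fin (d+1) → ℝ := fun j => ∑ i, ∑ k, Complex.normSq (P j i k) with ht
  have htr : ∀ j, Matrix.trace (P j * (P j)ᴴ) = ((t j : ℝ) : ℂ) :=
    fun j => trace_self_real _
  have htpos : ∀ j, 0 < t j := by
    intro j
    have hnn : 0 ≤ t j := Finset.sum_nonneg fun i _ =>
      Finset.sum_nonneg fun k _ => Complex.normSq_nonneg _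
    rcases hnn.lt_or_eq with h | h
    · exact h
    · exfalso
      apply hPnz j
      ext i k
      have h2 := (Finset.sum_eq_zero_iff_of_nonneg
        (fun i _ => Finset.sum_nonneg fun k _ => Complex.normSq_nonneg (P j i k))).mp h.symm
        i (Finset.mem_univ i)
      have h3 := (Finset.sum_eq_zero_iff_of_nonneg
        (fun k _ => Complex.normSq_nonneg (P j i k))).mp h2 k (Finset.mem_univ k)
      simpa using Complex.normSq_eq_zero.mp h3
  have htne : ∀ j, ((t j : ℝ) : ℂ) ≠ 0 := fun j => by
    exact_mod_cast Complex.ofReal_ne_zero.mpr (ne_of_gt (htpos j))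
  -- projection property: trace (M' * P jᴴ) = α j, trace (N * P jᴴ) = b j * t j
  have hMa : ∀ j, Matrix.trace (M' * (P j)ᴴ) = α j := by
    intro j
    have h2 := hMproj j
    rw [Matrix.sub_mul, Matrix.trace_sub, sub_eq_zero] at h2
    exact h2.symm
  have hNexp : ∀ j, Matrix.trace (N * (P j)ᴴ) = b j * ((t j : ℝ) : ℂ) := by
    intro j
    have h2 := hNproj j
    rw [Matrix.sub_mul, Matrix.trace_sub, sub_eq_zero] at h2
    rw [h2, ← hb, expand_trace, Finset.sum_eq_single j]
    · rw [htr]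
    · intro i _ hij; rw [horth i j hij, mul_zero]
    · simp
  have hβb : ∀ j, β j = star (b j) * ((t j : ℝ) : ℂ) := by
    intro j
    have h0 : β j = star (Matrix.trace (N * (P j)ᴴ)) := by
      rw [hβ]
      simp only
      rw [← Matrix.trace_conjTranspose, Matrix.conjTranspose_mul,
        Matrix.conjTranspose_conjTranspose]
    rw [h0, hNexp j, star_mul']
    congr 1
    exact Complex.conj_ofReal _
  -- main expansion
  have hT : Matrix.trace (M' * N'ᴴ) = ∑ j, α j * β j / ((t j : ℝ) : ℂ) := by
    have hN'H : N'ᴴ = ∑ j, star (b j) • (P j)ᴴ := by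
      rw [← hb, Matrix.conjTranspose_sum]
      simp [Matrix.conjTranspose_smul]
    rw [hN'H, Matrix.mul_sum, Matrix.trace_sum]
    refine Finset.sum_congr rfl fun j _ => ?_
    rw [Matrix.mul_smul, Matrix.trace_smul, smul_eq_mul, hMa j, hβb j]
    field_simp [htne j]
  -- split off j = 0
  have hsplit : Matrix.trace (M' * N'ᴴ) =
      Matrix.trace M * Matrix.trace N / n +
      ∑ j ∈ Finset.univ.erase 0, α j * β j / ((t j : ℝ) : ℂ) := by
    rw [hT, ← Finset.add_sum_erase _ _ (Finset.mem_univ (0 : Fin (d+1)))]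
    congr 1
    have hα0 : α 0 = Matrix.trace M := by
      rw [hα]; simp [hP0]
    have hβ0 : β 0 = Matrix.trace N := by
      rw [hβ]; simp [hP0, hN.isHermitian.eq]
    have ht0 : ((t 0 : ℝ) : ℂ) = (n : ℂ) := by
      rw [← htr 0, hP0]; simp
    rw [hα0, hβ0, ht0]
  -- each off term is nonpositive
  have hterm : ∀ j ∈ Finset.univ.erase (0 : Fin (d+1)),
      α j * β j / ((t j : ℝ) : ℂ) ≤ 0 := by
    intro j hj
    have hj0 : j ≠ 0 := (Finset.mem_erase.mp hj).1
    have h1 : α j * β j ≤ 0 := hneg j hj0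
    have h2 : α j * β j / ((t j : ℝ) : ℂ) = (t j)⁻¹ • (α j * β j) := by
      rw [Complex.real_smul, div_eq_mul_inv, mul_comm, Complex.ofReal_inv]
    rw [h2]
    exact smul_nonpos_of_nonneg_of_nonpos (inv_nonneg.mpr (le_of_lt (htpos j))) h1
  have hterm0 : ∀ j, α j * β j / ((t j : ℝ) : ℂ) = 0 ↔ α j * β j = 0 := by
    intro j
    rw [div_eq_zero_iff]
    exact ⟨fun h => h.resolve_right (htne j), Or.inl⟩
  constructor
  · rw [hsplit]
    have h := Finset.sum_nonpos hterm
    simpa using add_le_add_left h (Matrix.trace M * Matrix.trace N / (n : ℂ))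
  · rw [hsplit]
    rw [add_eq_left]
    rw [Finset.sum_eq_zero_iff_of_nonpos hterm]
    constructor
    · intro h i hi
      exact (hterm0 i).mp (h i (Finset.mem_erase.mpr ⟨hi, Finset.mem_univ i⟩))
    · intro h j hj
      exact (hterm0 j).mpr (h j (Finset.mem_erase.mp hj).1)
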